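/- Fix an integer m ≥ 2. The map ψ defined on finite simple graphs by ψ(G) = (m−1)·η(G) is a (reg,m)-compatible map, i.e., it satisfies conditions (a), (b) and (c) of the definition of (reg,m)-compatibility. -/

import Mathlib

/-- A maximal clique of a simple graph: a clique that is maximal under inclusion. -/
def MaxClq {V : Type*} (G : SimpleGraph V) (s : Set V) : Prop :=
  G.IsClique s ∧ ∀ t : Set V, G.IsClique t → s ⊆ t → s = t

/-- An internal vertex: a vertex lying in at least two (distinct) maximal cliques. -/
def InternalVtx {V : Type*} (G : SimpleGraph V) (v : V) : Prop :=
  ∃ s t : Set V, MaxClq G s ∧ MaxClq G t ∧ s ≠ t ∧ v ∈ s ∧ v ∈ t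

/-- `iv G`: the number of internal vertices of `G`. -/
noncomputable def ivNum {V : Type*} (G : SimpleGraph V) : ℕ :=
  {v : V | InternalVtx G v}.ncard

/-- `c G`: the number of connected components of `G`. -/
noncomputable def compNum {V : Type*} (G : SimpleGraph V) : ℕ :=
  Nat.card G.ConnectedComponent

/-- `𝒞 G`: the number of maximal cliques of `G`. -/
noncomputable def maxClqNum {V : Type*} (G : SimpleGraph V) : ℕ :=
  {s : Set V | MaxClq G s}.ncard

/-- `ω G`: the clique number of `G`, the maximum size of a clique. -/
noncomputable def clqNum {V : Type*} (G : SimpleGraph V) : ℕ :=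
  sSup {k : ℕ | ∃ s : Set V, G.IsClique s ∧ s.ncard = k}

/-- A set of edges of `G` is clique-disjoint if no two distinct edges of it are both
contained in a single clique of `G`. -/
def CliqueDisjointEdges {V : Type*} (G : SimpleGraph V) (E : Set (Sym2 V)) : Prop :=
  E ⊆ G.edgeSet ∧ ∀ e ∈ E, ∀ f ∈ E, e ≠ f →
    ¬ ∃ s : Set V, G.IsClique s ∧ (∀ x ∈ e, x ∈ s) ∧ (∀ x ∈ f, x ∈ s)

/-- `η G`: the maximum cardinality of a clique-disjoint set of edges of `G`. -/
noncomputable def etaNum {V : Type*} (G : SimpleGraph V) : ℕ :=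
  sSup {k : ℕ | ∃ E : Set (Sym2 V), CliqueDisjointEdges G E ∧ E.ncard = k}

/-- `G_v`: the graph on the same vertex set as `G` whose edges are those of `G` together
with all edges between distinct neighbours of `v`. -/
def addNbrEdges {V : Type*} (G : SimpleGraph V) (v : V) : SimpleGraph V where
  Adj a b := G.Adj a b ∨ (a ≠ b ∧ G.Adj v a ∧ G.Adj v b)
  symm := by
    constructor
    intro a b h
    rcases h with h | ⟨hne, h1, h2⟩
    · exact Or.inl h.symm
    · exact Or.inr ⟨hne.symm, h2, h1⟩
  loopless := by
    constructor
    intro a h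
    rcases h with h | ⟨hne, _, _⟩
    · exact G.irrefl h
    · exact hne rfl

/-- A map `ψ` from finite simple graphs to `ℕ` is `(reg, m)`-compatible if:
(a) `ψ(Ĝ) ≤ ψ(G)` where `Ĝ` is obtained from `G` by deleting all isolated vertices;
(b) if every connected component of `G` is a complete graph on at least 2 vertices,
then `ψ(G) ≥ Σ_i min {m − 1, n_i − 1}` where the `n_i` are the component sizes;
(c) if some connected component of `G` is not complete, then there is an internal vertex
`v` with `ψ(G∖v) ≤ ψ(G)` and `ψ(G_v) < ψ(G)`, or with `ψ(G∖v) ≤ ψ(G)`,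
`ψ(G_v) = ψ(G)` and `ψ(G_v∖v) < ψ(G)`. -/
def RegCompatible (m : ℕ) (ψ : ∀ (V : Type) [Finite V], SimpleGraph V → ℕ) : Prop :=
  (∀ (V : Type) [Finite V] (G : SimpleGraph V),
      ψ _ (G.induce {u : V | ∃ w : V, G.Adj u w}) ≤ ψ V G) ∧
  (∀ (V : Type) [Finite V] (G : SimpleGraph V),
      (∀ u w : V, G.Reachable u w → u ≠ w → G.Adj u w) →
      (∀ u : V, ∃ w : V, u ≠ w ∧ G.Reachable u w) →
      ∑ᶠ c : G.ConnectedComponent, min (m - 1) (c.supp.ncard - 1) ≤ ψ V G) ∧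
  (∀ (V : Type) [Finite V] (G : SimpleGraph V),
      (∃ u w : V, u ≠ w ∧ G.Reachable u w ∧ ¬ G.Adj u w) →
      ∃ v : V, InternalVtx G v ∧
        ((ψ _ (G.induce {u : V | u ≠ v}) ≤ ψ V G ∧ ψ V (addNbrEdges G v) < ψ V G) ∨
          (ψ _ (G.induce {u : V | u ≠ v}) ≤ ψ V G ∧ ψ V (addNbrEdges G v) = ψ V G ∧
            ψ _ ((addNbrEdges G v).induce {u : V | u ≠ v}) < ψ V G)))

section Aux

open SimpleGraph

variable {V : Type*}

lemma sym2_repr {α : Type*} (e : Sym2 α) : ∃ a b : α, e = s(a, b) := by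
  induction e using Sym2.ind with
  | _ a b => exact ⟨a, b, rfl⟩

lemma cd_empty (G : SimpleGraph V) : CliqueDisjointEdges G (∅ : Set (Sym2 V)) := by
  refine ⟨Set.empty_subset _, ?_⟩
  intro e he
  exact absurd he (Set.notMem_empty e)

lemma bddAbove_etaSet [Finite V] (G : SimpleGraph V) :
    BddAbove {k : ℕ | ∃ E : Set (Sym2 V), CliqueDisjointEdges G E ∧ E.ncard = k} := by
  refine ⟨(Set.univ : Set (Sym2 V)).ncard, ?_⟩
  rintro k ⟨E, _, rfl⟩
  exact Set.ncard_le_ncard (Set.subset_univ E) Set.finite_univ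

lemma etaSet_nonempty (G : SimpleGraph V) :
    Set.Nonempty {k : ℕ | ∃ E : Set (Sym2 V), CliqueDisjointEdges G E ∧ E.ncard = k} :=
  ⟨0, ∅, cd_empty G, Set.ncard_empty _⟩

lemma ncard_le_etaNum [Finite V] {G : SimpleGraph V} {E : Set (Sym2 V)}
    (h : CliqueDisjointEdges G E) : E.ncard ≤ etaNum G :=
  le_csSup (bddAbove_etaSet G) ⟨E, h, rfl⟩

lemma exists_eta [Finite V] (G : SimpleGraph V) :
    ∃ E : Set (Sym2 V), CliqueDisjointEdges G E ∧ E.ncard = etaNum G :=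
  Nat.sSup_mem (etaSet_nonempty G) (bddAbove_etaSet G)

lemma cd_induce_map (K : SimpleGraph V) (A : Set V) {E : Set (Sym2 A)}
    (h : CliqueDisjointEdges (K.induce A) E) :
    CliqueDisjointEdges K (Sym2.map Subtype.val '' E) ∧
    (Sym2.map (Subtype.val : A → V) '' E).ncard = E.ncard ∧
    (∀ f ∈ Sym2.map (Subtype.val : A → V) '' E, ∀ x ∈ f, x ∈ A) := by
  have hinj : Function.Injective (Subtype.val : A → V) := Subtype.val_injective
  refine ⟨⟨?_, ?_⟩, Set.ncard_image_of_injective _ (Sym2.map.injective hinj), ?_⟩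
  · rintro f ⟨e, heE, rfl⟩
    obtain ⟨x, y, rfl⟩ := sym2_repr e
    have h1 : (K.induce A).Adj x y := h.1 heE
    rw [Sym2.map_pair_eq]
    exact (K.mem_edgeSet).mpr h1
  · rintro f ⟨e, he, rfl⟩ g ⟨e', he', rfl⟩ hne ⟨s₀, hs₀, hfs, hgs⟩
    have hee' : e ≠ e' := by rintro rfl; exact hne rfl
    apply h.2 e he e' he' hee'
    refine ⟨{x : A | (x : V) ∈ s₀}, ?_, ?_, ?_⟩
    · intro x hx y hy hxy
      exact hs₀ hx hy (fun hh => hxy (Subtype.ext hh))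
    · intro x hx
      exact hfs _ (Sym2.mem_map.mpr ⟨x, hx, rfl⟩)
    · intro x hx
      exact hgs _ (Sym2.mem_map.mpr ⟨x, hx, rfl⟩)
  · rintro f ⟨e, he, rfl⟩ x hx
    rw [Sym2.mem_map] at hx
    obtain ⟨a, _, rfl⟩ := hx
    exact a.2

lemma etaNum_induce_le [Finite V] (K : SimpleGraph V) (A : Set V) :
    etaNum (K.induce A) ≤ etaNum K := by
  obtain ⟨E, hE, hcard⟩ := exists_eta (K.induce A)
  obtain ⟨hcd, hnc, -⟩ := cd_induce_map K A hE
  rw [← hcard, ← hnc]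
  exact ncard_le_etaNum hcd

lemma le_addNbr (G : SimpleGraph V) (v : V) : G ≤ addNbrEdges G v := by
  intro a b h; exact Or.inl h

lemma nbr_clique (G : SimpleGraph V) (v : V) :
    (addNbrEdges G v).IsClique {x | G.Adj v x} := by
  intro x hx y hy hxy
  exact Or.inr ⟨hxy, hx, hy⟩

lemma exists_maxclq [Finite V] {G : SimpleGraph V} {c : Set V} (hc : G.IsClique c) :
    ∃ s, MaxClq G s ∧ c ⊆ s := by
  obtain ⟨s, hs, hmax⟩ := Set.Finite.exists_maximalFor (id : Set V → Set V)
    {t : Set V | G.IsClique t ∧ c ⊆ t} (Set.toFinite _) ⟨c, hc, subset_rfl⟩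
  exact ⟨s, ⟨hs.1, fun t ht hst => le_antisymm hst (hmax ⟨ht, hs.2.trans hst⟩ hst)⟩, hs.2⟩

lemma internalVtx_of [Finite V] {G : SimpleGraph V} {v a b : V}
    (hva : G.Adj v a) (hvb : G.Adj v b) (hab : a ≠ b) (hnab : ¬ G.Adj a b) :
    InternalVtx G v := by
  have hc1 : G.IsClique {v, a} := by
    intro x hx y hy hxy
    rcases hx with rfl | hx <;> rcases hy with rfl | hy
    · exact absurd rfl hxy
    · rw [Set.mem_singleton_iff] at hy; subst hy; exact hva
    · rw [Set.mem_singleton_iff] at hx; subst hx; exact hva.symm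
    · rw [Set.mem_singleton_iff] at hx hy; subst hx; subst hy; exact absurd rfl hxy
  have hc2 : G.IsClique {v, b} := by
    intro x hx y hy hxy
    rcases hx with rfl | hx <;> rcases hy with rfl | hy
    · exact absurd rfl hxy
    · rw [Set.mem_singleton_iff] at hy; subst hy; exact hvb
    · rw [Set.mem_singleton_iff] at hx; subst hx; exact hvb.symm
    · rw [Set.mem_singleton_iff] at hx hy; subst hx; subst hy; exact absurd rfl hxy
  obtain ⟨s, hs, hsub1⟩ := exists_maxclq hc1
  obtain ⟨t, ht, hsub2⟩ := exists_maxclq hc2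
  refine ⟨s, t, hs, ht, ?_, hsub1 (Set.mem_insert _ _), hsub2 (Set.mem_insert _ _)⟩
  rintro rfl
  have ha : a ∈ s := hsub1 (Set.mem_insert_of_mem _ rfl)
  have hb : b ∈ s := hsub2 (Set.mem_insert_of_mem _ rfl)
  exact hnab (hs.1 ha hb hab)

lemma internal_pair {G : SimpleGraph V} {v : V} (h : InternalVtx G v) :
    ∃ a b, G.Adj v a ∧ G.Adj v b ∧ a ≠ b ∧ ¬ G.Adj a b := by
  by_contra hcon
  push_neg at hcon
  obtain ⟨s, t, hs, ht, hst, hvs, hvt⟩ := h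
  have hN : G.IsClique {x | x = v ∨ G.Adj v x} := by
    intro x hx y hy hxy
    rcases hx with rfl | hx
    · rcases hy with rfl | hy
      · exact absurd rfl hxy
      · exact hy
    · rcases hy with rfl | hy
      · exact hx.symm
      · exact hcon x y hx hy hxy
  have hsub : ∀ u : Set V, MaxClq G u → v ∈ u → u = {x | x = v ∨ G.Adj v x} := by
    intro u hu hvu
    apply hu.2 _ hN
    intro x hxu
    by_cases hxv : x = v
    · exact Or.inl hxv
    · exact Or.inr (hu.1 hvu hxu (Ne.symm hxv))
  exact hst ((hsub s hs hvs).trans (hsub t ht hvt).symm)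

lemma exists_triple {G : SimpleGraph V} {u w : V} (p : G.Walk u w) :
    u ≠ w → ¬ G.Adj u w → ∃ v a b, G.Adj v a ∧ G.Adj v b ∧ a ≠ b ∧ ¬ G.Adj a b := by
  induction p with
  | nil => intro h _; exact absurd rfl h
  | @cons u x w h q ih =>
    intro hne hnadj
    by_cases hxw : x = w
    · subst hxw; exact absurd h hnadj
    · by_cases haxw : G.Adj x w
      · exact ⟨x, u, w, h.symm, haxw, hne, hnadj⟩
      · exact ih hxw haxw

end Aux
section Main

open SimpleGraph

variable {V : Type*}

lemma eta_addNbr_le [Finite V] (G : SimpleGraph V) (v : V) :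
    etaNum (addNbrEdges G v) ≤ etaNum G := by
  obtain ⟨E, hE, hcard⟩ := exists_eta (addNbrEdges G v)
  rw [← hcard]
  by_cases hall : ∀ f ∈ E, f ∈ G.edgeSet
  · refine ncard_le_etaNum ⟨hall, ?_⟩
    rintro e he f hf hne ⟨s₀, hs₀, h1, h2⟩
    exact hE.2 e he f hf hne ⟨s₀, hs₀.mono (le_addNbr G v), h1, h2⟩
  · push_neg at hall
    obtain ⟨e₀, he₀E, he₀G⟩ := hall
    obtain ⟨a, b, rfl⟩ := sym2_repr e₀
    have hadj : (addNbrEdges G v).Adj a b := hE.1 he₀E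
    have hnG : ¬ G.Adj a b := fun h => he₀G ((G.mem_edgeSet).mpr h)
    obtain ⟨hab, hva, hvb⟩ : a ≠ b ∧ G.Adj v a ∧ G.Adj v b := by
      rcases hadj with h | h
      · exact absurd h hnG
      · exact h
    have habN : ∀ x ∈ s(a, b), G.Adj v x := by
      intro x hx
      rcases Sym2.mem_iff.mp hx with rfl | rfl
      exacts [hva, hvb]
    have honly : ∀ f ∈ E, (∀ x ∈ f, G.Adj v x) → f = s(a, b) := by
      intro f hf hfN
      by_contra hne
      exact hE.2 f hf _ he₀E hne ⟨{x | G.Adj v x}, nbr_clique G v, hfN, habN⟩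
    have hGe : ∀ f ∈ E, f ≠ s(a, b) → f ∈ G.edgeSet := by
      intro f hf hne
      obtain ⟨x, y, rfl⟩ := sym2_repr f
      rcases hE.1 hf with h | ⟨_, h1, h2⟩
      · exact (G.mem_edgeSet).mpr h
      · refine absurd (honly _ hf ?_) hne
        intro z hz
        rcases Sym2.mem_iff.mp hz with rfl | rfl
        exacts [h1, h2]
    have hclN : (addNbrEdges G v).IsClique (insert v {x | G.Adj v x}) := by
      intro x hx y hy hxy
      rcases hx with rfl | hx <;> rcases hy with rfl | hy
      · exact absurd rfl hxy
      · exact Or.inl hy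
      · exact Or.inl hx.symm
      · exact Or.inr ⟨hxy, hx, hy⟩
    have hvE : s(v, a) ∉ E := by
      intro hmem
      have hneq : s(v, a) ≠ s(a, b) := by
        intro h
        rcases Sym2.eq_iff.mp h with ⟨_, h2⟩ | ⟨h1, _⟩
        · exact hab h2
        · exact hvb.ne h1
      apply hE.2 _ hmem _ he₀E hneq
      refine ⟨insert v {x | G.Adj v x}, hclN, ?_, ?_⟩
      · intro x hx
        rcases Sym2.mem_iff.mp hx with rfl | rfl
        · exact Set.mem_insert _ _
        · exact Set.mem_insert_of_mem _ hva
      · intro x hx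
        rcases Sym2.mem_iff.mp hx with rfl | rfl
        · exact Set.mem_insert_of_mem _ hva
        · exact Set.mem_insert_of_mem _ hvb
    have hne₁ : s(v, a) ∉ E \ {s(a, b)} := fun h => hvE h.1
    have hdiff := Set.ncard_diff_singleton_add_one he₀E (Set.toFinite E)
    have hcard₁ : (insert s(v, a) (E \ {s(a, b)})).ncard = E.ncard := by
      rw [Set.ncard_insert_of_notMem hne₁ (Set.toFinite _)]
      omega
    rw [← hcard₁]
    apply ncard_le_etaNum
    have key : ∀ f ∈ E \ {s(a, b)},
        ¬∃ s₀ : Set V, G.IsClique s₀ ∧ (∀ x ∈ s(v, a), x ∈ s₀) ∧ (∀ x ∈ f, x ∈ s₀) := by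
      rintro f ⟨hfE, hfne⟩ ⟨s₀, hs₀, hva', hf'⟩
      have hvmem : v ∈ s₀ := hva' v (Sym2.mem_mk_left _ _)
      have hamem : a ∈ s₀ := hva' a (Sym2.mem_mk_right _ _)
      have hcl : (addNbrEdges G v).IsClique (insert b s₀) := by
        intro x hx y hy hxy
        rcases hx with rfl | hx <;> rcases hy with rfl | hy
        · exact absurd rfl hxy
        · by_cases hyv : y = v
          · subst hyv; exact Or.inl hvb.symm
          · exact Or.inr ⟨hxy, hvb, hs₀ hvmem hy (Ne.symm hyv)⟩
        · by_cases hxv : x = v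
          · subst hxv; exact Or.inl hvb
          · exact Or.inr ⟨hxy, hs₀ hvmem hx (Ne.symm hxv), hvb⟩
        · exact Or.inl (hs₀ hx hy hxy)
      apply hE.2 f hfE _ he₀E (by simpa using hfne)
      refine ⟨insert b s₀, hcl, fun x hx => Set.mem_insert_of_mem _ (hf' x hx), ?_⟩
      intro x hx
      rcases Sym2.mem_iff.mp hx with rfl | rfl
      · exact Set.mem_insert_of_mem _ hamem
      · exact Set.mem_insert _ _
    refine ⟨?_, ?_⟩
    · rintro f hf
      rcases hf with rfl | ⟨hfE, hfne⟩
      · exact (G.mem_edgeSet).mpr hva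
      · exact hGe f hfE (by simpa using hfne)
    · rintro f hf g hg hfg hex
      rcases hf with rfl | hf <;> rcases hg with rfl | hg
      · exact hfg rfl
      · exact key g hg hex
      · obtain ⟨s₀, h, h1, h2⟩ := hex
        exact key f hf ⟨s₀, h, h2, h1⟩
      · exact hE.2 f hf.1 g hg.1 hfg
          (by obtain ⟨s₀, h, h1, h2⟩ := hex; exact ⟨s₀, h.mono (le_addNbr G v), h1, h2⟩)

lemma eta_key [Finite V] (G : SimpleGraph V) (v : V) (hint : InternalVtx G v) :
    etaNum ((addNbrEdges G v).induce {u : V | u ≠ v}) < etaNum G := by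
  obtain ⟨p, q, hvp, hvq, hpq, hnpq⟩ := internal_pair hint
  obtain ⟨E, hE, hcard⟩ := exists_eta ((addNbrEdges G v).induce {u : V | u ≠ v})
  obtain ⟨hF, hFc, hFs⟩ := cd_induce_map (addNbrEdges G v) {u : V | u ≠ v} hE
  set F := Sym2.map (Subtype.val : {u : V | u ≠ v} → V) '' E with hFdef
  suffices h : F.ncard + 1 ≤ etaNum G by omega
  clear hcard hFc
  have havoid : ∀ f ∈ F, ∀ x ∈ f, x ≠ v := hFs
  have hvnot : ∀ x : V, s(v, x) ∉ F := fun x h => havoid _ h v (Sym2.mem_mk_left _ _) rfl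
  have d1 : ∀ f ∈ F, ∀ s₀ : Set V, G.IsClique s₀ → v ∈ s₀ → (∀ x ∈ f, x ∈ s₀) →
      ∀ x ∈ f, G.Adj v x := by
    intro f hf s₀ hs₀ hv hsub x hx
    exact hs₀ hv (hsub x hx) (Ne.symm (havoid f hf x hx))
  have d2 : ∀ f ∈ F, ∀ g ∈ F, (∀ x ∈ f, G.Adj v x) → (∀ x ∈ g, G.Adj v x) → f = g := by
    intro f hf g hg h1 h2
    by_contra hne
    exact hF.2 f hf g hg hne ⟨{x | G.Adj v x}, nbr_clique G v, h1, h2⟩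
  have d3 : ∀ f ∈ F, ¬(∀ x ∈ f, G.Adj v x) → f ∈ G.edgeSet := by
    intro f hf hnot
    obtain ⟨x, y, rfl⟩ := sym2_repr f
    rcases hF.1 hf with h | ⟨_, h1, h2⟩
    · exact h
    · refine absurd ?_ hnot
      intro z hz
      rcases Sym2.mem_iff.mp hz with rfl | rfl
      exacts [h1, h2]
  have d4 : ∀ f ∈ F, ∀ g ∈ F, f ≠ g →
      ¬∃ s₀ : Set V, G.IsClique s₀ ∧ (∀ x ∈ f, x ∈ s₀) ∧ (∀ x ∈ g, x ∈ s₀) := by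
    rintro f hf g hg hne ⟨s₀, hs₀, h1, h2⟩
    by_cases hv : v ∈ s₀
    · exact hne (d2 f hf g hg (d1 f hf s₀ hs₀ hv h1) (d1 g hg s₀ hs₀ hv h2))
    · exact hF.2 f hf g hg hne ⟨s₀, hs₀.mono (le_addNbr G v), h1, h2⟩
  by_cases hP : ∃ e₀ ∈ F, ∀ x ∈ e₀, G.Adj v x
  · -- Case B: swap e₀ for the two edges s(v,p), s(v,q)
    obtain ⟨e₀, he₀, he₀N⟩ := hP
    have honly : ∀ f ∈ F, (∀ x ∈ f, G.Adj v x) → f = e₀ := fun f hf h => d2 f hf _ he₀ h he₀N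
    have hd1 : s(v, p) ≠ s(v, q) := by
      intro h
      rcases Sym2.eq_iff.mp h with ⟨_, h2⟩ | ⟨h1, _⟩
      · exact hpq h2
      · exact hvq.ne h1
    have hnm1 : s(v, q) ∉ F \ {e₀} := fun h => hvnot q h.1
    have hnm2 : s(v, p) ∉ insert s(v, q) (F \ {e₀}) := by
      rintro (h | h)
      · exact hd1 h
      · exact hvnot p h.1
    have hdiff := Set.ncard_diff_singleton_add_one he₀ (Set.toFinite F)
    have hcard2 : (insert s(v, p) (insert s(v, q) (F \ {e₀}))).ncard = F.ncard + 1 := by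
      rw [Set.ncard_insert_of_notMem hnm2 (Set.toFinite _),
        Set.ncard_insert_of_notMem hnm1 (Set.toFinite _)]
      omega
    rw [← hcard2]
    apply ncard_le_etaNum
    have keyP : ∀ r : V, G.Adj v r → ∀ f ∈ F \ {e₀},
        ¬∃ s₀ : Set V, G.IsClique s₀ ∧ (∀ x ∈ s(v, r), x ∈ s₀) ∧ (∀ x ∈ f, x ∈ s₀) := by
      rintro r hvr f ⟨hfF, hfne⟩ ⟨s₀, hs₀, h1, h2⟩
      exact (by simpa using hfne : f ≠ e₀)
        (honly f hfF (d1 f hfF s₀ hs₀ (h1 v (Sym2.mem_mk_left _ _)) h2))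
    have keyPQ : ¬∃ s₀ : Set V, G.IsClique s₀ ∧ (∀ x ∈ s(v, p), x ∈ s₀) ∧
        (∀ x ∈ s(v, q), x ∈ s₀) := by
      rintro ⟨s₀, hs₀, h1, h2⟩
      exact hnpq (hs₀ (h1 p (Sym2.mem_mk_right _ _)) (h2 q (Sym2.mem_mk_right _ _)) hpq)
    refine ⟨?_, ?_⟩
    · rintro f hf
      rcases hf with rfl | rfl | ⟨hfF, hfne⟩
      · exact (G.mem_edgeSet).mpr hvp
      · exact (G.mem_edgeSet).mpr hvq
      · exact d3 f hfF (fun h => (by simpa using hfne : f ≠ e₀) (honly f hfF h))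
    · rintro f hf g hg hfg hex
      rcases hf with rfl | rfl | hf <;> rcases hg with rfl | rfl | hg
      · exact hfg rfl
      · exact keyPQ hex
      · exact keyP p hvp g hg hex
      · obtain ⟨s₀, h, h1, h2⟩ := hex; exact keyPQ ⟨s₀, h, h2, h1⟩
      · exact hfg rfl
      · exact keyP q hvq g hg hex
      · obtain ⟨s₀, h, h1, h2⟩ := hex; exact keyP p hvp f hf ⟨s₀, h, h2, h1⟩
      · obtain ⟨s₀, h, h1, h2⟩ := hex; exact keyP q hvq f hf ⟨s₀, h, h2, h1⟩
      · exact d4 f hf.1 g hg.1 hfg hex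
  · -- Case A: just add s(v,p)
    have hA : ∀ f ∈ F, ¬(∀ x ∈ f, G.Adj v x) := fun f hf hall => hP ⟨f, hf, hall⟩
    have hcard2 : (insert s(v, p) F).ncard = F.ncard + 1 :=
      Set.ncard_insert_of_notMem (hvnot p) (Set.toFinite _)
    rw [← hcard2]
    apply ncard_le_etaNum
    have key : ∀ f ∈ F,
        ¬∃ s₀ : Set V, G.IsClique s₀ ∧ (∀ x ∈ s(v, p), x ∈ s₀) ∧ (∀ x ∈ f, x ∈ s₀) := by
      rintro f hf ⟨s₀, hs₀, h1, h2⟩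
      exact hA f hf (d1 f hf s₀ hs₀ (h1 v (Sym2.mem_mk_left _ _)) h2)
    refine ⟨?_, ?_⟩
    · rintro f hf
      rcases hf with rfl | hf
      · exact (G.mem_edgeSet).mpr hvp
      · exact d3 f hf (hA f hf)
    · rintro f hf g hg hfg hex
      rcases hf with rfl | hf <;> rcases hg with rfl | hg
      · exact hfg rfl
      · exact key g hg hex
      · obtain ⟨s₀, h, h1, h2⟩ := hex; exact key f hf ⟨s₀, h, h2, h1⟩
      · exact d4 f hf g hg hfg hex

end Main
/-- for every integer `m ≥ 2`, the map `G ↦ (m − 1)·η(G)` is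
`(reg, m)`-compatible. -/
theorem stmt8 (m : ℕ) (hm : 2 ≤ m) :
    RegCompatible m (fun V _ G => (m - 1) * etaNum G) := by
  have hpos : 0 < m - 1 := by omega
  refine ⟨?_, ?_, ?_⟩
  · intro V _ G
    exact Nat.mul_le_mul_left _ (etaNum_induce_le G _)
  · intro V _ G hcl hni
    have : Fintype G.ConnectedComponent := Fintype.ofFinite _
    have hchoice : ∀ c : G.ConnectedComponent,
        ∃ x y : V, G.Adj x y ∧ G.connectedComponentMk x = c := by
      intro c
      obtain ⟨u, rfl⟩ := c.exists_rep
      obtain ⟨w, hne, hr⟩ := hni u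
      exact ⟨u, w, hcl u w hr hne, rfl⟩
    choose x y hadj hmk using hchoice
    have hsame : ∀ c, G.connectedComponentMk (y c) = c := by
      intro c
      exact (SimpleGraph.ConnectedComponent.eq.mpr (hadj c).symm.reachable).trans (hmk c)
    have hCD : CliqueDisjointEdges G (Set.range fun c => s(x c, y c)) := by
      constructor
      · rintro f ⟨c, rfl⟩
        exact (G.mem_edgeSet).mpr (hadj c)
      · rintro f ⟨c, rfl⟩ g ⟨c', rfl⟩ hne ⟨s₀, hs₀, h1, h2⟩
        apply hne
        have hcc : c = c' := by
          have hx1 : x c ∈ s₀ := h1 _ (Sym2.mem_mk_left _ _)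
          have hx2 : x c' ∈ s₀ := h2 _ (Sym2.mem_mk_left _ _)
          by_cases hxx : x c = x c'
          · rw [← hmk c, hxx, hmk c']
          · calc c = G.connectedComponentMk (x c) := (hmk c).symm
              _ = G.connectedComponentMk (x c') :=
                SimpleGraph.ConnectedComponent.eq.mpr (hs₀ hx1 hx2 hxx).reachable
              _ = c' := hmk c'
        rw [hcc]
    have hinj : Function.Injective (fun c : G.ConnectedComponent => s(x c, y c)) := by
      intro c c' h
      have h' : s(x c, y c) = s(x c', y c') := h
      rcases Sym2.eq_iff.mp h' with ⟨heq, _⟩ | ⟨heq, _⟩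
      · rw [← hmk c, heq, hmk c']
      · rw [← hmk c, heq, hsame c']
    have hcardr : (Set.range fun c : G.ConnectedComponent => s(x c, y c)).ncard
        = Fintype.card G.ConnectedComponent := by
      rw [← Set.image_univ, Set.ncard_image_of_injective _ hinj, Set.ncard_univ,
        Nat.card_eq_fintype_card]
    have h1 : Fintype.card G.ConnectedComponent ≤ etaNum G := by
      rw [← hcardr]; exact ncard_le_etaNum hCD
    calc ∑ᶠ c : G.ConnectedComponent, min (m - 1) (c.supp.ncard - 1)
        = ∑ c : G.ConnectedComponent, min (m - 1) (c.supp.ncard - 1) :=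
          finsum_eq_sum_of_fintype _
      _ ≤ ∑ _c : G.ConnectedComponent, (m - 1) :=
          Finset.sum_le_sum (fun i _ => min_le_left _ _)
      _ = Fintype.card G.ConnectedComponent * (m - 1) := by
          rw [Finset.sum_const, smul_eq_mul, Finset.card_univ]
      _ = (m - 1) * Fintype.card G.ConnectedComponent := mul_comm _ _
      _ ≤ (m - 1) * etaNum G := Nat.mul_le_mul_left _ h1
  · rintro V _ G ⟨u, w, hne, hr, hnadj⟩
    obtain ⟨walk⟩ := hr
    obtain ⟨v, a, b, hva, hvb, hab, hnab⟩ := exists_triple walk hne hnadj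
    have hint : InternalVtx G v := internalVtx_of hva hvb hab hnab
    refine ⟨v, hint, ?_⟩
    have h1 : (m - 1) * etaNum (G.induce {u : V | u ≠ v}) ≤ (m - 1) * etaNum G :=
      Nat.mul_le_mul_left _ (etaNum_induce_le G _)
    have h2 := eta_addNbr_le G v
    rcases lt_or_eq_of_le h2 with hlt | heq
    · exact Or.inl ⟨h1, mul_lt_mul_of_pos_left hlt hpos⟩
    · exact Or.inr ⟨h1, by dsimp only; rw [heq],
        mul_lt_mul_of_pos_left (eta_key G v hint) hpos⟩
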